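/- arXiv:1904.08219 — 3 statements merged into one kernel-verified Lean document; each statement's English description precedes it below -/
import Mathlib

section
/- For positive integers n, k with k ≥ 2, and an integer vector s = (s_1, ..., s_k) with s_i ≥ 2 for i ≠ k, s_k ∈ {1,2}, and n ≥ s_1 + ... + s_{k-1} + 2, the map c sending an s-stable k-subset A of [n] to min(min A, n - (s_1 + ... + s_{k-1})) is a proper coloring of the s-stable Kneser graph KG(n,k)_{s-stab} with n - (s_1 + ... + s_{k-1}) colors. -/
/-- The `j`-th smallest element (0-indexed) of a finite set of naturals (default `0`). -/
def sortedNth (A : Finset ℕ) (j : ℕ) : ℕ := (A.sort (· ≤ ·)).getD j 0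

/-- `A` is an `s`-stable `k`-subset of `[n] = {1,…,n}`: writing `A(0) < A(1) < ⋯ < A(k-1)`
for its elements, `A(j+1) - A(j) ≥ s j` for `j + 1 < k`, and `A(k-1) - A(0) ≤ n - s (k-1)`
(formulated additively to avoid truncated subtraction). -/
def VecStable (n k : ℕ) (s : ℕ → ℕ) (A : Finset ℕ) : Prop :=
  A ⊆ Finset.Icc 1 n ∧ A.card = k ∧
    (∀ j, j + 1 < k → sortedNth A j + s j ≤ sortedNth A (j + 1)) ∧
    sortedNth A (k - 1) + s (k - 1) ≤ sortedNth A 0 + n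

/-- The `s`-stable Kneser graph `KG(n,k)_{s-stab}`: vertices are the `s`-stable
`k`-subsets of `[n]`, adjacent iff disjoint. -/
def stableKneser (n k : ℕ) (s : ℕ → ℕ) :
    SimpleGraph {A : Finset ℕ // VecStable n k s A} where
  Adj X Y := X ≠ Y ∧ Disjoint X.1 Y.1
  symm := ⟨fun _ _ h => ⟨h.1.symm, h.2.symm⟩⟩
  loopless := ⟨fun _ h => h.1 rfl⟩

/-- The set `U = {1, s₁+1, s₁+s₂+1, …}` (the `j`-th element is `s₁+⋯+s_j + 1`). -/
def Uset (k : ℕ) (s : ℕ → ℕ) : Finset ℕ :=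
  (Finset.range k).image (fun j => (∑ i ∈ Finset.range j, s i) + 1)

/-- The set `V = {2, s₁+2, s₁+s₂+2, …}`. -/
def Vset (k : ℕ) (s : ℕ → ℕ) : Finset ℕ :=
  (Finset.range k).image (fun j => (∑ i ∈ Finset.range j, s i) + 2)

lemma sortedNth_mem (A : Finset ℕ) (j : ℕ) (hj : j < A.card) : sortedNth A j ∈ A := by
  have hlen : (A.sort (· ≤ ·)).length = A.card := Finset.length_sort _
  have h : sortedNth A j = (A.sort (· ≤ ·)).get ⟨j, by omega⟩ :=
    by simp [sortedNth, List.getD_eq_getElem?_getD, List.getElem?_eq_getElem, hlen, hj]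
  rw [h]
  exact (Finset.mem_sort _).mp (List.get_mem _ _)

lemma chain_le (n k : ℕ) (s : ℕ → ℕ) (A : Finset ℕ) (hA : VecStable n k s A) :
    ∀ j, j ≤ k - 1 → sortedNth A 0 + ∑ i ∈ Finset.range j, s i ≤ sortedNth A j := by
  intro j hj
  induction j with
  | zero => simp
  | succ m ih =>
      have hm : m ≤ k - 1 := by omega
      have h1 : m + 1 < k := by omega
      have := hA.2.2.1 m h1
      have := ih hm
      rw [Finset.sum_range_succ]
      omega

/-- the map `c(A) = min(min A, n - (s₁+⋯+s_{k-1}))` is a proper coloring of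
`KG(n,k)_{s-stab}` with `n - (s₁+⋯+s_{k-1})` colors. -/
theorem stmt0 (n k : ℕ) (s : ℕ → ℕ) (hk : 2 ≤ k)
    (hs : ∀ i, i + 1 < k → 2 ≤ s i) (hsk : s (k - 1) = 1 ∨ s (k - 1) = 2)
    (hn : (∑ i ∈ Finset.range (k - 1), s i) + 2 ≤ n) :
    (∀ A : Finset ℕ, VecStable n k s A →
      min (sortedNth A 0) (n - ∑ i ∈ Finset.range (k - 1), s i) ∈
        Finset.Icc 1 (n - ∑ i ∈ Finset.range (k - 1), s i)) ∧
    (∀ A B : Finset ℕ, VecStable n k s A → VecStable n k s B →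
      Disjoint A B → A ≠ B →
      min (sortedNth A 0) (n - ∑ i ∈ Finset.range (k - 1), s i) ≠
        min (sortedNth B 0) (n - ∑ i ∈ Finset.range (k - 1), s i)) := by

  have key : ∀ A : Finset ℕ, VecStable n k s A →
      min (sortedNth A 0) (n - ∑ i ∈ Finset.range (k - 1), s i) = sortedNth A 0 ∧
      1 ≤ sortedNth A 0 ∧ sortedNth A 0 ∈ A ∧
      sortedNth A 0 ≤ n - ∑ i ∈ Finset.range (k - 1), s i := by
    intro A hA
    have hcard := hA.2.1
    have h0 : sortedNth A 0 ∈ A := sortedNth_mem A 0 (by omega)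
    have hk1 : sortedNth A (k - 1) ∈ A := sortedNth_mem A (k - 1) (by omega)
    have h0Icc := hA.1 h0
    have hk1Icc := hA.1 hk1
    rw [Finset.mem_Icc] at h0Icc hk1Icc
    have hchain := chain_le n k s A hA (k - 1) le_rfl
    have hle : sortedNth A 0 ≤ n - ∑ i ∈ Finset.range (k - 1), s i := by omega
    exact ⟨min_eq_left hle, h0Icc.1, h0, hle⟩
  constructor
  · intro A hA
    obtain ⟨hmin, h1, _, hle⟩ := key A hA
    rw [hmin, Finset.mem_Icc]
    exact ⟨h1, hle⟩
  · intro A B hA hB hdisj _ heq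
    obtain ⟨hmA, _, hAmem, _⟩ := key A hA
    obtain ⟨hmB, _, hBmem, _⟩ := key B hB
    rw [hmA, hmB] at heq
    exact Finset.disjoint_left.mp hdisj hAmem (heq ▸ hBmem)
end

section
/- Let n, k be positive integers and s⃗ = (s_1,...,s_k) a positive integer vector. Define P(n,k,s⃗) as the poset of pairs (A,B) of disjoint subsets of [n] each containing an s⃗-stable k-subset, ordered componentwise by inclusion, and define Hom_p(K_2, G) for G = KG(n,k)_{s⃗-stab} as the poset of pairs (𝒜,ℬ) of nonempty disjoint sets of vertices with every vertex of 𝒜 adjacent to every vertex of ℬ. Then the maps φ(𝒜,ℬ) = (∪𝒜, ∪ℬ) and ψ(A,B) = ({s⃗-stable k-subsets of A}, {s⃗-stable k-subsets of B}) are well-defined order-preserving maps between these posets, with ψ∘φ ≥ id and φ∘ψ ≤ id pointwise. -/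
/-- Membership in the poset `P(n,k,s⃗)`: pairs `(A,B)` of disjoint subsets of `[n]`,
each containing an `s⃗`-stable `k`-subset. -/
def Ppred (n k : ℕ) (s : ℕ → ℕ) (A B : Finset ℕ) : Prop :=
  A ⊆ Finset.Icc 1 n ∧ B ⊆ Finset.Icc 1 n ∧ Disjoint A B ∧
    (∃ C ⊆ A, VecStable n k s C) ∧ (∃ C ⊆ B, VecStable n k s C)

/-- Membership in the poset `Hom_p(K₂, KG(n,k)_{s⃗-stab})`: pairs `(𝒜,ℬ)` of nonempty
families of `s⃗`-stable `k`-subsets such that every member of `𝒜` is adjacent (i.e.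
disjoint and distinct) to every member of `ℬ`. -/
def Hpred (n k : ℕ) (s : ℕ → ℕ) (F G : Finset (Finset ℕ)) : Prop :=
  F.Nonempty ∧ G.Nonempty ∧ (∀ X ∈ F, VecStable n k s X) ∧ (∀ Y ∈ G, VecStable n k s Y) ∧
    ∀ X ∈ F, ∀ Y ∈ G, X ≠ Y ∧ Disjoint X Y

open Classical in
/-- The family of all `s⃗`-stable `k`-subsets of `A`. -/
noncomputable def stableSubsets (n k : ℕ) (s : ℕ → ℕ) (A : Finset ℕ) : Finset (Finset ℕ) :=
  A.powerset.filter (VecStable n k s)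

/-- `φ(𝒜,ℬ) = (⋃𝒜, ⋃ℬ)` and `ψ(A,B) = (stable subsets of A, stable
subsets of B)` are well-defined order-preserving maps between `Hom_p(K₂,KG(n,k)_{s⃗-stab})`
and `P(n,k,s⃗)`, with `ψ∘φ ≥ id` and `φ∘ψ ≤ id` pointwise. -/
theorem stmt10 (n k : ℕ) (s : ℕ → ℕ) (hn : 1 ≤ n) (hk : 1 ≤ k)
    (hs : ∀ i, i < k → 1 ≤ s i) :
    (∀ F G : Finset (Finset ℕ), Hpred n k s F G →
      Ppred n k s (F.biUnion id) (G.biUnion id)) ∧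
    (∀ A B : Finset ℕ, Ppred n k s A B →
      Hpred n k s (stableSubsets n k s A) (stableSubsets n k s B)) ∧
    (∀ F G F' G' : Finset (Finset ℕ), Hpred n k s F G → Hpred n k s F' G' →
      F ⊆ F' → G ⊆ G' → F.biUnion id ⊆ F'.biUnion id ∧ G.biUnion id ⊆ G'.biUnion id) ∧
    (∀ A B A' B' : Finset ℕ, Ppred n k s A B → Ppred n k s A' B' → A ⊆ A' → B ⊆ B' →
      stableSubsets n k s A ⊆ stableSubsets n k s A' ∧
      stableSubsets n k s B ⊆ stableSubsets n k s B') ∧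
    (∀ F G : Finset (Finset ℕ), Hpred n k s F G →
      F ⊆ stableSubsets n k s (F.biUnion id) ∧ G ⊆ stableSubsets n k s (G.biUnion id)) ∧
    (∀ A B : Finset ℕ, Ppred n k s A B →
      (stableSubsets n k s A).biUnion id ⊆ A ∧ (stableSubsets n k s B).biUnion id ⊆ B) := by
  
  classical
  have hmem : ∀ A X : Finset ℕ, X ∈ stableSubsets n k s A ↔ X ⊆ A ∧ VecStable n k s X := by
    intro A X
    simp [stableSubsets, Finset.mem_filter, Finset.mem_powerset]
  have hne : ∀ X : Finset ℕ, VecStable n k s X → X.Nonempty := by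
    intro X hX
    rw [← Finset.card_pos, hX.2.1]; exact hk
  refine ⟨?_, ?_, ?_, ?_, ?_, ?_⟩
  · rintro F G ⟨hF, hG, hFs, hGs, hadj⟩
    refine ⟨?_, ?_, ?_, ?_, ?_⟩
    · intro x hx
      obtain ⟨X, hX, hxX⟩ := Finset.mem_biUnion.1 hx
      exact (hFs X hX).1 hxX
    · intro x hx
      obtain ⟨Y, hY, hxY⟩ := Finset.mem_biUnion.1 hx
      exact (hGs Y hY).1 hxY
    · rw [Finset.disjoint_left]
      intro x hx hx'
      obtain ⟨X, hX, hxX⟩ := Finset.mem_biUnion.1 hx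
      obtain ⟨Y, hY, hxY⟩ := Finset.mem_biUnion.1 hx'
      exact (Finset.disjoint_left.1 (hadj X hX Y hY).2) hxX hxY
    · obtain ⟨X, hX⟩ := hF
      exact ⟨X, Finset.subset_biUnion_of_mem id hX, hFs X hX⟩
    · obtain ⟨Y, hY⟩ := hG
      exact ⟨Y, Finset.subset_biUnion_of_mem id hY, hGs Y hY⟩
  · rintro A B ⟨hA, hB, hAB, ⟨C, hCA, hC⟩, ⟨D, hDB, hD⟩⟩
    refine ⟨⟨C, (hmem A C).2 ⟨hCA, hC⟩⟩, ⟨D, (hmem B D).2 ⟨hDB, hD⟩⟩,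
      fun X hX => ((hmem A X).1 hX).2, fun Y hY => ((hmem B Y).1 hY).2, ?_⟩
    intro X hX Y hY
    obtain ⟨hXA, hXs⟩ := (hmem A X).1 hX
    obtain ⟨hYB, hYs⟩ := (hmem B Y).1 hY
    have hdisj : Disjoint X Y := hAB.mono hXA hYB
    refine ⟨?_, hdisj⟩
    rintro rfl
    obtain ⟨x, hx⟩ := hne X hXs
    exact (Finset.disjoint_left.1 hdisj) hx hx
  · intro F G F' G' _ _ hFF hGG
    constructor <;> intro x hx <;> obtain ⟨X, hX, hxX⟩ := Finset.mem_biUnion.1 hx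
    · exact Finset.mem_biUnion.2 ⟨X, hFF hX, hxX⟩
    · exact Finset.mem_biUnion.2 ⟨X, hGG hX, hxX⟩
  · intro A B A' B' _ _ hAA hBB
    constructor <;> intro X hX
    · obtain ⟨h1, h2⟩ := (hmem A X).1 hX
      exact (hmem A' X).2 ⟨h1.trans hAA, h2⟩
    · obtain ⟨h1, h2⟩ := (hmem B X).1 hX
      exact (hmem B' X).2 ⟨h1.trans hBB, h2⟩
  · rintro F G ⟨hF, hG, hFs, hGs, hadj⟩
    constructor <;> intro X hX
    · exact (hmem _ X).2 ⟨Finset.subset_biUnion_of_mem id hX, hFs X hX⟩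
    · exact (hmem _ X).2 ⟨Finset.subset_biUnion_of_mem id hX, hGs X hX⟩
  · intro A B _
    constructor <;> intro x hx <;> obtain ⟨X, hX, hxX⟩ := Finset.mem_biUnion.1 hx
    · exact ((hmem A X).1 hX).1 hxX
    · exact ((hmem B X).1 hX).1 hxX
end

section
/- Let P be a finite poset and ψ : P → P an order-preserving map with ψ(x) ≥ x for all x (an increasing operator). Then the order complex of P is homotopy equivalent to the order complex of the image of ψ. -/
open Function

/-- The geometric realization of the order complex `Δ(P)` of a preorder `P`, realized
inside `P → ℝ`: convex combinations of points of `P` whose support is a chain. -/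
def orderComplex (P : Type*) [Preorder P] : Set (P → ℝ) :=
  {x | (∀ p, 0 ≤ x p) ∧ (support x).Finite ∧ ∑ᶠ p, x p = 1 ∧
    IsChain (· ≤ ·) (support x)}

open Finset in
open Classical in
/-- Pushforward of a weight function along `θ`. -/
noncomputable def pushF {P Q : Type*} [Fintype P] (θ : P → Q) (x : P → ℝ) : Q → ℝ :=
  fun q => ∑ p, if θ p = q then x p else 0

section Push
variable {P Q : Type*} [Fintype P] [Fintype Q]
set_option linter.unusedSectionVars false

open Classical

lemma pushF_nonneg (θ : P → Q) {x : P → ℝ} (hx : ∀ p, 0 ≤ x p) (q : Q) :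
    0 ≤ pushF θ x q :=
  Finset.sum_nonneg fun p _ => by split <;> simp [hx p]

lemma pushF_sum (θ : P → Q) (x : P → ℝ) : ∑ q, pushF θ x q = ∑ p, x p := by
  classical
  unfold pushF
  rw [Finset.sum_comm]
  simp

lemma support_pushF (θ : P → Q) (x : P → ℝ) :
    support (pushF θ x) ⊆ θ '' support x := by
  intro q hq
  obtain ⟨p, -, hp⟩ := Finset.exists_ne_zero_of_sum_ne_zero hq
  by_cases h : θ p = q
  · exact ⟨p, by simpa [h] using hp, h⟩
  · simp [h] at hp

lemma pushF_comp {R : Type*} (θ₁ : P → Q) (θ₂ : Q → R) (x : P → ℝ) :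
    pushF (θ₂ ∘ θ₁) x = pushF θ₂ (pushF θ₁ x) := by
  classical
  funext r
  unfold pushF
  calc (∑ p, if (θ₂ ∘ θ₁) p = r then x p else 0)
      = ∑ p, ∑ q : Q, if θ₁ p = q then (if θ₂ q = r then x p else 0) else 0 := by
        simp [Function.comp]
    _ = ∑ q : Q, ∑ p, if θ₁ p = q then (if θ₂ q = r then x p else 0) else 0 :=
        Finset.sum_comm
    _ = ∑ q : Q, if θ₂ q = r then (∑ p, if θ₁ p = q then x p else 0) else 0 := by
        refine Finset.sum_congr rfl fun q _ => ?_
        split_ifs with h <;> simp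

lemma continuous_pushF (θ : P → Q) : Continuous fun x : P → ℝ => pushF θ x := by
  unfold pushF
  exact continuous_pi fun q => continuous_finset_sum _ fun p _ => by
    split <;> [exact continuous_apply p; exact continuous_const]

end Push

section Mem
variable {P Q : Type*} [Preorder P] [Preorder Q] [Fintype P] [Fintype Q]
set_option linter.unusedSectionVars false

lemma mem_orderComplex_iff (x : P → ℝ) :
    x ∈ orderComplex P ↔
      (∀ p, 0 ≤ x p) ∧ ∑ p, x p = 1 ∧ IsChain (· ≤ ·) (support x) := by
  simp [orderComplex, Set.toFinite _, finsum_eq_sum_of_fintype]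

lemma pushF_mem {θ : P → Q} (hθ : Monotone θ) {x : P → ℝ}
    (hx : x ∈ orderComplex P) : pushF θ x ∈ orderComplex Q := by
  rw [mem_orderComplex_iff] at hx ⊢
  obtain ⟨h0, h1, hc⟩ := hx
  refine ⟨pushF_nonneg θ h0, by rw [pushF_sum, h1], ?_⟩
  exact (hc.image_of_map_rel _ _ _ fun a b h => hθ h).mono (support_pushF θ x)

end Mem

open Classical in
/-- Mass strictly above `p`. -/
noncomputable def Tfun {P : Type*} [Preorder P] [Fintype P] (x : P → ℝ) (p : P) : ℝ :=
  ∑ q, if p < q then x q else 0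

open Classical in
/-- Amount of mass converted at `p` at time `t` (mass is converted from the top down). -/
noncomputable def cfun {P : Type*} [Preorder P] [Fintype P] (x : P → ℝ) (t : ℝ) (p : P) : ℝ :=
  min (x p) (max 0 (t - Tfun x p))

/-- The homotopy from `id` to the pushforward along `ψ`. -/
noncomputable def Hfun {P : Type*} [Preorder P] [Fintype P] (ψ : P → P) (x : P → ℝ) (t : ℝ) :
    P → ℝ :=
  fun r => (x r - cfun x t r) + pushF ψ (cfun x t) r

section Homotopy
variable {P : Type*} [PartialOrder P] [Fintype P]
set_option linter.unusedSectionVars false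

lemma Tfun_nonneg {x : P → ℝ} (h0 : ∀ p, 0 ≤ x p) (p : P) : 0 ≤ Tfun x p :=
  Finset.sum_nonneg fun q _ => by split <;> simp [h0 q]

lemma cfun_nonneg {x : P → ℝ} (h0 : ∀ p, 0 ≤ x p) (t : ℝ) (p : P) : 0 ≤ cfun x t p :=
  le_min (h0 p) (le_max_left _ _)

lemma cfun_le {x : P → ℝ} (t : ℝ) (p : P) : cfun x t p ≤ x p := min_le_left _ _

lemma Tfun_add_le {x : P → ℝ} (h0 : ∀ p, 0 ≤ x p) {p p' : P} (hpp : p < p') :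
    Tfun x p' + x p' ≤ Tfun x p := by
  classical
  have key : ∀ q : P, (if p' < q then x q else 0) + (if q = p' then x q else 0)
      ≤ (if p < q then x q else 0) := by
    intro q
    by_cases hA : p' < q
    · have hC : p < q := hpp.trans hA
      have hB : ¬ q = p' := fun h => absurd (h ▸ hA) (lt_irrefl _)
      simp [hA, hB, hC]
    · by_cases hB : q = p'
      · subst hB
        simp [hA, hpp]
      · simp only [if_neg hA, if_neg hB, zero_add]
        split <;> simp [h0 q]
  calc Tfun x p' + x p'
      = ∑ q, ((if p' < q then x q else 0) + (if q = p' then x q else 0)) := by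
        rw [Finset.sum_add_distrib]
        simp [Tfun]
    _ ≤ ∑ q, (if p < q then x q else 0) := Finset.sum_le_sum fun q _ => key q
    _ = Tfun x p := rfl

/-- Key claim: if there is unconverted mass at `p'` then nothing below `p'` has been
converted yet. -/
lemma cfun_eq_zero {x : P → ℝ} (h0 : ∀ p, 0 ≤ x p) {t : ℝ} {p p' : P}
    (hpp : p < p') (h : cfun x t p' < x p') : cfun x t p = 0 := by
  have h1 : t - Tfun x p' < x p' := by
    by_contra h2
    push_neg at h2
    have : cfun x t p' = x p' :=
      min_eq_left (le_trans h2 (le_max_right _ _))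
    linarith
  have hT := Tfun_add_le h0 hpp
  have : t - Tfun x p ≤ 0 := by linarith
  have : max 0 (t - Tfun x p) = 0 := max_eq_left this
  simp [cfun, this, h0 p]

lemma Hfun_mem {x : P → ℝ} (hx : x ∈ orderComplex P) {ψ : P → P} (hψm : Monotone ψ)
    (hψ : ∀ p, p ≤ ψ p) (t : ℝ) : Hfun ψ x t ∈ orderComplex P := by
  classical
  rw [mem_orderComplex_iff] at hx ⊢
  obtain ⟨h0, h1, hc⟩ := hx
  have hc0 : ∀ p, 0 ≤ cfun x t p := cfun_nonneg h0 t
  have hcle : ∀ p, cfun x t p ≤ x p := cfun_le t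
  have hpush0 : ∀ r, 0 ≤ pushF ψ (cfun x t) r := pushF_nonneg ψ hc0
  refine ⟨fun r => add_nonneg (by linarith [hcle r]) (hpush0 r), ?_, ?_⟩
  · have : ∑ r, Hfun ψ x t r
        = (∑ r, x r) - (∑ r, cfun x t r) + ∑ r, pushF ψ (cfun x t) r := by
      simp [Hfun, Finset.sum_add_distrib, Finset.sum_sub_distrib]
    rw [this, pushF_sum, h1]
    ring
  · -- the support is a chain
    have hsplit : ∀ r, Hfun ψ x t r ≠ 0 →
        (cfun x t r < x r ∧ x r ≠ 0) ∨ ∃ p, cfun x t p ≠ 0 ∧ ψ p = r := by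
      intro r hr
      by_cases ha : x r - cfun x t r = 0
      · refine Or.inr ?_
        have hb : pushF ψ (cfun x t) r ≠ 0 := by
          intro hb; exact hr (by simp [Hfun, ha, hb])
        obtain ⟨p, -, hp⟩ := Finset.exists_ne_zero_of_sum_ne_zero hb
        by_cases h : ψ p = r
        · exact ⟨p, by simpa [h] using hp, h⟩
        · simp [h] at hp
      · left
        have : cfun x t r < x r := lt_of_le_of_ne (hcle r) fun h => ha (by rw [h]; ring)
        exact ⟨this, by intro h; rw [h] at this; linarith [hc0 r]⟩
    have hcsupp : ∀ p, cfun x t p ≠ 0 → x p ≠ 0 := by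
      intro p hp h
      have := hcle p
      have := hc0 p
      rw [h] at *
      exact hp (le_antisymm ‹cfun x t p ≤ 0› ‹0 ≤ cfun x t p›)
    intro a ha b hb hab
    obtain hA | ⟨p, hp, hpa⟩ := hsplit a ha <;> obtain hB | ⟨p', hp', hpb⟩ := hsplit b hb
    · exact hc (by exact hA.2) (by exact hB.2) hab
    · -- a unconverted, b = ψ p'
      subst hpb
      rcases eq_or_ne a p' with rfl | hne
      · exact Or.inl (hψ a)
      · rcases hc (hA.2) (hcsupp p' hp') hne with h | h
        · exact Or.inl (h.trans (hψ p'))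
        · exact absurd (cfun_eq_zero h0 (lt_of_le_of_ne h hne.symm) hA.1) hp'
    · -- b unconverted, a = ψ p
      subst hpa
      rcases eq_or_ne b p with rfl | hne
      · exact Or.inr (hψ b)
      · rcases hc (hB.2) (hcsupp p hp) hne with h | h
        · exact Or.inr (h.trans (hψ p))
        · exact absurd (cfun_eq_zero h0 (lt_of_le_of_ne h hne.symm) hB.1) hp
    · subst hpa; subst hpb
      rcases eq_or_ne p p' with rfl | hne
      · exact absurd rfl hab
      · rcases hc (hcsupp p hp) (hcsupp p' hp') hne with h | h
        · exact Or.inl (hψm h)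
        · exact Or.inr (hψm h)

lemma Hfun_zero {x : P → ℝ} (h0 : ∀ p, 0 ≤ x p) (ψ : P → P) : Hfun ψ x 0 = x := by
  have hc : cfun x 0 = fun _ : P => 0 := by
    funext p
    have h : max 0 (0 - Tfun x p) = 0 := max_eq_left (by linarith [Tfun_nonneg h0 p])
    show min (x p) (max 0 (0 - Tfun x p)) = 0
    rw [h]
    exact min_eq_right (h0 p)
  have hp : pushF ψ (fun _ : P => 0) = fun _ : P => 0 := by
    funext r
    simp [pushF]
  funext r
  simp [Hfun, hc, hp]

lemma Hfun_one {x : P → ℝ} (h0 : ∀ p, 0 ≤ x p) (h1 : ∑ p, x p = 1) (ψ : P → P) :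
    Hfun ψ x 1 = pushF ψ x := by
  classical
  have hc : cfun x 1 = x := by
    funext p
    have key : ∀ q : P, (if p < q then x q else 0) + (if q = p then x q else 0) ≤ x q := by
      intro q
      by_cases hB : q = p
      · subst hB; simp
      · simp only [if_neg hB, add_zero]
        split <;> simp [h0 q]
    have hTp : Tfun x p + x p ≤ 1 := by
      calc Tfun x p + x p
          = ∑ q, ((if p < q then x q else 0) + (if q = p then x q else 0)) := by
            rw [Finset.sum_add_distrib]
            simp [Tfun]
        _ ≤ ∑ q, x q := Finset.sum_le_sum fun q _ => key q
        _ = 1 := h1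
    have : x p ≤ 1 - Tfun x p := by linarith
    exact min_eq_left (le_trans this (le_max_right _ _))
  funext r
  simp [Hfun, hc]

end Homotopy

section Maps
variable {P Q : Type*} [Preorder P] [Preorder Q] [Fintype P] [Fintype Q]
set_option linter.unusedSectionVars false

lemma continuous_Hfun (ψ : P → P) :
    Continuous fun z : ℝ × (P → ℝ) => Hfun ψ z.2 z.1 := by
  have hT : ∀ p : P, Continuous fun z : ℝ × (P → ℝ) => Tfun z.2 p := fun p => by
    unfold Tfun
    exact continuous_finset_sum _ fun q _ => by
      split
      · exact (continuous_apply q).comp continuous_snd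
      · exact continuous_const
  have hc : Continuous fun z : ℝ × (P → ℝ) => cfun z.2 z.1 := by
    refine continuous_pi fun p => ?_
    unfold cfun
    exact ((continuous_apply p).comp continuous_snd).min
      (continuous_const.max (continuous_fst.sub (hT p)))
  refine continuous_pi fun r => ?_
  unfold Hfun
  exact (((continuous_apply r).comp continuous_snd).sub
      ((continuous_apply r).comp hc)).add
    ((continuous_apply r).comp ((continuous_pushF ψ).comp hc))

/-- Pushforward as a continuous map between order complexes. -/
noncomputable def pushCM (θ : P →o Q) : C(orderComplex P, orderComplex Q) where
  toFun x := ⟨pushF θ x.1, pushF_mem θ.monotone x.2⟩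
  continuous_toFun :=
    Continuous.subtype_mk ((continuous_pushF θ).comp continuous_subtype_val) _

lemma pushCM_comp {R : Type*} [Preorder R] [Fintype R] (θ₁ : P →o Q) (θ₂ : Q →o R) :
    (pushCM θ₂).comp (pushCM θ₁) = pushCM (θ₂.comp θ₁) :=
  ContinuousMap.ext fun x => Subtype.ext (pushF_comp θ₁ θ₂ x.1).symm

end Maps

/-- The homotopy from the identity of the order complex to the pushforward along an
increasing monotone map. -/
noncomputable def homotopyIdPush {P : Type*} [PartialOrder P] [Fintype P]
    (ψ : P →o P) (hψ : ∀ p, p ≤ ψ p) :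
    (ContinuousMap.id (orderComplex P)).Homotopy (pushCM ψ) where
  toFun z := ⟨Hfun ψ (z.2 : P → ℝ) (z.1 : ℝ), Hfun_mem z.2.2 ψ.monotone hψ _⟩
  continuous_toFun := by
    refine Continuous.subtype_mk ?_ _
    exact (continuous_Hfun ψ).comp
      ((continuous_subtype_val.comp continuous_fst).prodMk
        (continuous_subtype_val.comp continuous_snd))
  map_zero_left x := Subtype.ext <| by
    have h0 := ((mem_orderComplex_iff (x : P → ℝ)).mp x.2).1
    simpa using Hfun_zero h0 ψ
  map_one_left x := Subtype.ext <| by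
    obtain ⟨h0, h1, -⟩ := (mem_orderComplex_iff (x : P → ℝ)).mp x.2
    simpa [pushCM] using Hfun_one h0 h1 ψ


/-- an increasing operator `ψ` on a finite poset `P` induces a homotopy
equivalence between the order complex of `P` and that of the image of `ψ`. -/
theorem stmt13 (P : Type*) [PartialOrder P] [Finite P] (ψ : P →o P)
    (hψ : ∀ x, x ≤ ψ x) :
    Nonempty (ContinuousMap.HomotopyEquiv (orderComplex P)
      (orderComplex (Set.range (ψ : P → P)))) := by
  classical
  letI : Fintype P := Fintype.ofFinite P
  letI : Fintype (Set.range (ψ : P → P)) := Fintype.ofFinite _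
  set Q := Set.range (ψ : P → P) with hQ
  let ψ' : P →o Q := ⟨fun p => ⟨ψ p, Set.mem_range_self p⟩, fun a b h => ψ.monotone h⟩
  let ι : Q →o P := ⟨Subtype.val, fun a b h => h⟩
  have hcompP : ι.comp ψ' = ψ := rfl
  have hψQ : ∀ q : Q, q ≤ (ψ'.comp ι) q := fun q => hψ q.1
  refine ⟨{ toFun := pushCM ψ', invFun := pushCM ι, left_inv := ?_, right_inv := ?_ }⟩
  · rw [pushCM_comp, hcompP]
    exact ContinuousMap.Homotopic.symm ⟨homotopyIdPush ψ hψ⟩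
  · rw [pushCM_comp]
    exact ContinuousMap.Homotopic.symm ⟨homotopyIdPush (ψ'.comp ι) hψQ⟩
end
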